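/- Let (r_1, …, r_a) be a composition of r+1 with a ≥ 2, let (k_{x_1}, …, k_r) ∈ D_{(r_1⋯r_a)}, and set w = Π_2 Π_3 ⋯ Π_a. Let 1 ≤ m ≤ n ≤ r. Then at least one of the following holds: (1) w(α_t) is a positive root for some m ≤ t ≤ n; (2) there exists an integer c ≥ 1 such that Π_a(α_{m+t}) = α_{c+t} for all 0 ≤ t ≤ n − m; (3) w(α_m) is a negative root and there exists an integer c ≥ 1 such that Π_a(α_{m+1+t}) = α_{c+t} for all 0 ≤ t ≤ n − m − 1 (this last condition being vacuous when n = m). -/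

import Mathlib

open Equiv Finset

/-- The simple reflection `s i = (i, i+1)` (1-based) in `S_{r+1}`, for `1 ≤ i ≤ r`;
the junk value `1` otherwise. -/
def sr (r i : ℕ) : Equiv.Perm (Fin (r + 1)) :=
  if h : 1 ≤ i ∧ i ≤ r then Equiv.swap ⟨i - 1, by omega⟩ ⟨i, by omega⟩ else 1

/-- The cycle `π_k` with ambient index `i`, i.e. `s_i s_{i-1} ⋯ s_k`
(the identity when `k = i + 1`). -/
def cyc (r i k : ℕ) : Equiv.Perm (Fin (r + 1)) :=
  ((List.range (i + 1 - k)).map fun t => sr r (i - t)).prod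

/-- The product `π_{k i} π_{k (i+1)} ⋯ π_{k j}`, the factor `π_{k t}` being the
cycle with ambient index `t`. -/
def cycProd (r : ℕ) (k : ℕ → ℕ) (i j : ℕ) : Equiv.Perm (Fin (r + 1)) :=
  ((List.range' i (j + 1 - i)).map fun t => cyc r t (k t)).prod

/-- Coxeter length of a permutation: the number of inversions. -/
def lenInv {n : ℕ} (w : Equiv.Perm (Fin n)) : ℕ :=
  (Finset.univ.filter fun p : Fin n × Fin n => p.1 < p.2 ∧ w p.2 < w p.1).card

/-- Partial sums of a (1-based) composition: `psum c j = c 1 + ⋯ + c j`. -/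
def psum (c : ℕ → ℕ) (j : ℕ) : ℕ := ∑ i ∈ Finset.Icc 1 j, c i

/-- The transpose partition of `(t 1, …, t b)`: `transp b t j = #{i ∈ [1,b] : t i ≥ j}`. -/
def transp (b : ℕ) (t : ℕ → ℕ) (j : ℕ) : ℕ :=
  ((Finset.Icc 1 b).filter fun i => j ≤ t i).card

/-- The element of `Fin (r+1)` with value `i` (for `i ≤ r`). -/
def finOf (r i : ℕ) : Fin (r + 1) := ⟨min i r, by omega⟩

/-- `w(α_i)` is a positive root, where `α_i = e_i − e_{i+1}` (1-based), i.e. the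
0-based pair `(i-1, i)`; `w(e_c − e_d) = e_{w c} − e_{w d}` is positive iff `w c < w d`. -/
def posRoot (r : ℕ) (w : Equiv.Perm (Fin (r + 1))) (i : ℕ) : Prop :=
  (w (finOf r (i - 1)) : ℕ) < w (finOf r i)

/-- `w(α_i)` is a negative root. -/
def negRoot (r : ℕ) (w : Equiv.Perm (Fin (r + 1))) (i : ℕ) : Prop :=
  (w (finOf r i) : ℕ) < w (finOf r (i - 1))

/-- `w(α_i)` is a simple root. -/
def simpleRoot (r : ℕ) (w : Equiv.Perm (Fin (r + 1))) (i : ℕ) : Prop :=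
  (w (finOf r i) : ℕ) = (w (finOf r (i - 1)) : ℕ) + 1

/-- `w(α_i) = α_j` (as roots: the image pair is `(j-1, j)` in 0-based indices). -/
def eqRoot (r : ℕ) (w : Equiv.Perm (Fin (r + 1))) (i j : ℕ) : Prop :=
  (w (finOf r (i - 1)) : ℕ) = j - 1 ∧ (w (finOf r i) : ℕ) = j

/-- `Π_l Π_{l+1} ⋯ Π_a` for the composition `c` and tuple `k`, where
`Π_j = π_{k_{x_{j-1}}} ⋯ π_{k_{x_j - 1}}` and `x_j = psum c j`. -/
def tailProd (r a : ℕ) (c k : ℕ → ℕ) (l : ℕ) : Equiv.Perm (Fin (r + 1)) :=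
  ((List.range' l (a + 1 - l)).map fun j => cycProd r k (psum c (j - 1)) (psum c j - 1)).prod

/-- The subgroup `W(P)`: generated by the simple reflections `s i` with `i ∈ [1,r]`
avoiding the partial sums `x 1, …, x (a-1)` of the composition `c`. -/
def WP (r a : ℕ) (c : ℕ → ℕ) : Subgroup (Equiv.Perm (Fin (r + 1))) :=
  Subgroup.closure
    {g | ∃ i, 1 ≤ i ∧ i ≤ r ∧ (∀ j, 1 ≤ j → j ≤ a - 1 → i ≠ psum c j) ∧ g = sr r i}

/-- `α_i ∈ Δ_λ` for the composition `λ = (p 1, …, p m)` of `r+1`. -/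
def inDelta (r m : ℕ) (p : ℕ → ℕ) (i : ℕ) : Prop :=
  1 ≤ i ∧ i ≤ r ∧ ∀ j, 1 ≤ j → j ≤ m - 1 → i ≠ psum p j

/-- The left coset `H · g`. -/
def cosetOf {G : Type*} [Group G] (H : Subgroup G) (g : G) : Set G :=
  {x | ∃ h ∈ H, x = h * g}

/-- The (0-based) positions `u` and `v` lie in the same block of the composition
`μ^⊤ = transp b t`; a negative root `e_c − e_d` lies in `Φ⁻_{μ^⊤}` iff its two
indices lie in the same block. -/
def sameBlock (b : ℕ) (t : ℕ → ℕ) (u v : ℕ) : Prop :=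
  ∃ j, 1 ≤ j ∧ j ≤ t 1 ∧
    psum (transp b t) (j - 1) ≤ u ∧ u < psum (transp b t) j ∧
    psum (transp b t) (j - 1) ≤ v ∧ v < psum (transp b t) j


section Aux

lemma sr_val (r kk : ℕ) (h1 : 1 ≤ kk) (h2 : kk ≤ r) (v : Fin (r+1)) :
    ((sr r kk) v : ℕ) = if (v:ℕ) = kk - 1 then kk else if (v:ℕ) = kk then kk - 1 else v := by
  unfold sr
  rw [dif_pos ⟨h1, h2⟩]
  rcases eq_or_ne (v:ℕ) (kk-1) with h | h
  · rw [if_pos h]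
    have : v = (⟨kk-1, by omega⟩ : Fin (r+1)) := by exact Fin.ext h
    rw [this, Equiv.swap_apply_left]
  · rw [if_neg h]
    rcases eq_or_ne (v:ℕ) kk with h' | h'
    · rw [if_pos h']
      have : v = (⟨kk, by omega⟩ : Fin (r+1)) := by exact Fin.ext h'
      rw [this, Equiv.swap_apply_right]
    · rw [if_neg h']
      rw [Equiv.swap_apply_of_ne_of_ne]
      · exact fun hc => h (by rw [hc])
      · exact fun hc => h' (by rw [hc])

lemma sr_fix (r i : ℕ) (v : Fin (r+1)) (hv : ∀ h1 : 1 ≤ i, ∀ h2 : i ≤ r, (v:ℕ) ≠ i - 1 ∧ (v:ℕ) ≠ i) :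
    sr r i v = v := by
  unfold sr
  split
  · next h =>
    rcases hv h.1 h.2 with ⟨ha, hb⟩
    exact Equiv.swap_apply_of_ne_of_ne (fun hc => ha (by rw [hc])) (fun hc => hb (by rw [hc]))
  · rfl

lemma cyc_succ (r i kk : ℕ) (h : kk ≤ i) :
    cyc r i kk = cyc r i (kk+1) * sr r kk := by
  unfold cyc
  rw [show i + 1 - kk = (i - kk) + 1 by omega, List.range_succ, List.map_append,
    List.prod_append]
  simp [show i - (i - kk) = kk by omega, show i + 1 - (kk+1) = i - kk by omega]

lemma cyc_eval (r i kk : ℕ) (hi : i ≤ r) (hk : 1 ≤ kk) (hki : kk ≤ i + 1) (v : Fin (r+1)) :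
    ((v:ℕ) + 1 = kk ∧ ((cyc r i kk) v : ℕ) = i) ∨
    (kk ≤ (v:ℕ) ∧ (v:ℕ) ≤ i ∧ ((cyc r i kk) v : ℕ) + 1 = (v:ℕ)) ∨
    ((v:ℕ) + 1 ≠ kk ∧ ¬(kk ≤ (v:ℕ) ∧ (v:ℕ) ≤ i) ∧ (cyc r i kk) v = v) := by
  suffices H : ∀ d kk, 1 ≤ kk → kk + d = i + 1 → ∀ v : Fin (r+1),
      ((v:ℕ) + 1 = kk ∧ ((cyc r i kk) v : ℕ) = i) ∨
      (kk ≤ (v:ℕ) ∧ (v:ℕ) ≤ i ∧ ((cyc r i kk) v : ℕ) + 1 = (v:ℕ)) ∨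
      ((v:ℕ) + 1 ≠ kk ∧ ¬(kk ≤ (v:ℕ) ∧ (v:ℕ) ≤ i) ∧ (cyc r i kk) v = v) by
    exact H (i + 1 - kk) kk hk (by omega) v
  clear hk hki v
  intro d
  induction d with
  | zero =>
    intro kk hk hkd v
    have hkk : kk = i + 1 := by omega
    subst hkk
    have hid : cyc r i (i+1) = 1 := by
      unfold cyc; simp
    rcases eq_or_ne (v:ℕ) i with h | h
    · left; rw [hid]; exact ⟨by omega, by simpa using h⟩
    · right; right
      rw [hid]
      exact ⟨by omega, by omega, rfl⟩
  | succ d ih =>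
    intro kk hk hkd v
    have hki : kk ≤ i := by omega
    rw [cyc_succ r i kk hki, Equiv.Perm.mul_apply]
    have hsr := sr_val r kk hk (by omega) v
    rcases eq_or_ne (v:ℕ) (kk-1) with h | h
    · -- sr sends v to kk; then cyc (kk+1) sends kk ↦ i
      rw [if_pos h] at hsr
      rcases ih (kk+1) (by omega) (by omega) (sr r kk v) with ⟨h1, h2⟩ | ⟨h1, h2, h3⟩ | ⟨h1, h2, h3⟩
      · left; exact ⟨by omega, h2⟩
      · omega
      · omega
    · rw [if_neg h] at hsr
      rcases eq_or_ne (v:ℕ) kk with h' | h'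
      · -- sr sends v to kk - 1; then fixed by cyc (kk+1)
        rw [if_pos h'] at hsr
        rcases ih (kk+1) (by omega) (by omega) (sr r kk v) with ⟨h1, h2⟩ | ⟨h1, h2, h3⟩ | ⟨h1, h2, h3⟩
        · omega
        · omega
        · right; left
          refine ⟨by omega, by omega, ?_⟩
          have : ((cyc r i (kk+1)) (sr r kk v) : ℕ) = kk - 1 := by rw [h3]; exact hsr
          omega
      · rw [if_neg h'] at hsr
        have hfix : sr r kk v = v := by
          apply sr_fix; intro _ _; exact ⟨h, h'⟩
        rw [hfix]
        rcases ih (kk+1) (by omega) (by omega) v with ⟨h1, h2⟩ | ⟨h1, h2, h3⟩ | ⟨h1, h2, h3⟩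
        · omega
        · right; left; exact ⟨by omega, h2, h3⟩
        · right; right; exact ⟨by omega, by omega, h3⟩

lemma prod_fix {n : ℕ} (l : List (Equiv.Perm (Fin n))) (v : Fin n)
    (h : ∀ g ∈ l, g v = v) : l.prod v = v := by
  induction l with
  | nil => rfl
  | cons g l ih =>
    rw [List.prod_cons, Equiv.Perm.mul_apply, ih (fun g' hg' => h g' (by simp [hg']))]
    exact h g (by simp)

lemma sr_fix_big (r i x : ℕ) (v : Fin (r+1)) (hi : i < x) (hv : x ≤ (v:ℕ)) :
    sr r i v = v := by
  apply sr_fix; intro _ _; omega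

lemma cyc_fix_big (r i kk x : ℕ) (v : Fin (r+1)) (hi : i < x) (hv : x ≤ (v:ℕ)) :
    cyc r i kk v = v := by
  apply prod_fix
  intro g hg
  simp only [List.mem_map, List.mem_range] at hg
  obtain ⟨t, _, rfl⟩ := hg
  exact sr_fix_big r (i - t) x v (by omega) hv

lemma cycProd_fix_big (r b e x : ℕ) (k : ℕ → ℕ) (v : Fin (r+1)) (he : e < x) (hv : x ≤ (v:ℕ)) :
    cycProd r k b e v = v := by
  apply prod_fix
  intro g hg
  simp only [List.mem_map, List.mem_range'_1] at hg
  obtain ⟨t, ht, rfl⟩ := hg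
  exact cyc_fix_big r t (k t) x v (by omega) hv

lemma psum_one (c : ℕ → ℕ) : psum c 1 = c 1 := by simp [psum]

lemma psum_succ (c : ℕ → ℕ) (j : ℕ) : psum c (j + 1) = psum c j + c (j + 1) := by
  unfold psum
  rw [Finset.sum_Icc_succ_top (by omega)]

lemma psum_mono (c : ℕ → ℕ) {i j : ℕ} (h : i ≤ j) : psum c i ≤ psum c j := by
  unfold psum
  exact Finset.sum_le_sum_of_subset (Finset.Icc_subset_Icc_right h)

lemma tailProd_last (r a : ℕ) (c k : ℕ → ℕ) :
    tailProd r a c k a = cycProd r k (psum c (a - 1)) (psum c a - 1) := by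
  unfold tailProd
  rw [show a + 1 - a = 1 by omega]
  simp [List.range']

lemma tailProd_split (r a : ℕ) (c k : ℕ → ℕ) (ha : 2 ≤ a) :
    tailProd r a c k 2 =
      (((List.range' 2 (a - 2)).map fun j => cycProd r k (psum c (j - 1)) (psum c j - 1)).prod) *
        tailProd r a c k a := by
  rw [tailProd_last]
  unfold tailProd
  rw [show a + 1 - 2 = (a - 2) + 1 by omega, List.range'_concat, List.map_append,
    List.prod_append, show 2 + 1 * (a - 2) = a by omega]
  simp

lemma cycProd_cons (r : ℕ) (k : ℕ → ℕ) (b : ℕ) (hb : b ≤ r) :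
    cycProd r k b r = cyc r b (k b) * cycProd r k (b+1) r := by
  unfold cycProd
  rw [show r + 1 - b = (r - b) + 1 by omega, List.range'_succ, List.map_cons, List.prod_cons,
    show r + 1 - (b+1) = r - b by omega]

lemma kmono (r b : ℕ) (k : ℕ → ℕ) (hk2 : ∀ i, b ≤ i → i < r → k i < k (i+1)) :
    ∀ i j, b ≤ i → i < j → j ≤ r → k i < k j := by
  intro i j hbi hij hjr
  induction j with
  | zero => omega
  | succ j ihj =>
    rcases eq_or_ne i j with h | h
    · subst h; exact hk2 i hbi (by omega)
    · exact lt_trans (ihj (by omega) (by omega)) (hk2 j (by omega) (by omega))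

lemma cycProd_eval (r : ℕ) (k : ℕ → ℕ) (b : ℕ) (hb : b ≤ r + 1)
    (hk1 : ∀ i, b ≤ i → i ≤ r → 1 ≤ k i ∧ k i ≤ i + 1)
    (hk2 : ∀ i, b ≤ i → i < r → k i < k (i+1)) (v : Fin (r+1)) :
    (∃ i, b ≤ i ∧ i ≤ r ∧ (v:ℕ) + 1 = k i ∧ ((cycProd r k b r) v : ℕ) = i) ∨
    ((∀ i, b ≤ i → i ≤ r → (v:ℕ) + 1 ≠ k i) ∧
     ((cycProd r k b r) v : ℕ) + ((Finset.Icc b r).filter fun i => k i ≤ (v:ℕ)).card = (v:ℕ) ∧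
     ((cycProd r k b r) v : ℕ) + 1 ≤ b) := by
  suffices H : ∀ d b, b + d = r + 1 →
      (∀ i, b ≤ i → i ≤ r → 1 ≤ k i ∧ k i ≤ i + 1) →
      (∀ i, b ≤ i → i < r → k i < k (i+1)) → ∀ v : Fin (r+1),
      (∃ i, b ≤ i ∧ i ≤ r ∧ (v:ℕ) + 1 = k i ∧ ((cycProd r k b r) v : ℕ) = i) ∨
      ((∀ i, b ≤ i → i ≤ r → (v:ℕ) + 1 ≠ k i) ∧
       ((cycProd r k b r) v : ℕ) + ((Finset.Icc b r).filter fun i => k i ≤ (v:ℕ)).card = (v:ℕ) ∧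
       ((cycProd r k b r) v : ℕ) + 1 ≤ b) by
    exact H (r + 1 - b) b (by omega) hk1 hk2 v
  clear hb hk1 hk2 v
  intro d
  induction d with
  | zero =>
    intro b hbd hk1 hk2 v
    have hb : b = r + 1 := by omega
    subst hb
    have hid : cycProd r k (r+1) r = 1 := by unfold cycProd; simp
    right
    refine ⟨fun i h1 h2 => by omega, ?_, ?_⟩
    · rw [hid]
      have : Finset.Icc (r+1) r = ∅ := by
        apply Finset.Icc_eq_empty; omega
      simp [this]
    · rw [hid]; have := v.isLt; simp; omega
  | succ d ih =>
    intro b hbd hk1 hk2 v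
    have hbr : b ≤ r := by omega
    have hkb := hk1 b le_rfl hbr
    rw [cycProd_cons r k b hbr, Equiv.Perm.mul_apply]
    have hicc : Finset.Icc b r = insert b (Finset.Icc (b+1) r) := by
      rw [Finset.Icc_add_one_left_eq_Ioc, Finset.Ioc_insert_left hbr]
    have hnmem : b ∉ Finset.Icc (b+1) r := by simp
    have hmono : ∀ i j, b ≤ i → i < j → j ≤ r → k i < k j :=
      kmono r b k (fun i h1 h2 => hk2 i h1 h2)
    rcases ih (b+1) (by omega) (fun i h1 h2 => hk1 i (by omega) h2)
        (fun i h1 h2 => hk2 i (by omega) h2) v with ⟨i, hbi, hir, hvk, hres⟩ | ⟨hnot, hcard, hbound⟩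
    · -- v + 1 = k i for some i ≥ b+1 : inner result is i, fixed by cyc r b (k b)
      left
      refine ⟨i, by omega, hir, hvk, ?_⟩
      rcases cyc_eval r b (k b) hbr hkb.1 hkb.2 ((cycProd r k (b+1) r) v) with ⟨h1, h2⟩ | ⟨h1, h2, h3⟩ | ⟨h1, h2, h3⟩
      · exfalso
        have : k b < k i := hmono b i le_rfl (by omega) hir
        omega
      · exfalso
        have : k b < k i := hmono b i le_rfl (by omega) hir
        omega
      · rw [h3]; exact hres
    · set g := ((cycProd r k (b+1) r) v : ℕ) with hg
      rcases eq_or_ne ((v:ℕ) + 1) (k b) with hvb | hvb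
      · -- v + 1 = k b; all k i (i ≥ b+1) exceed k b = v+1 > v, so filter empty and g = v
        have hflt : (Finset.Icc (b+1) r).filter (fun i => k i ≤ (v:ℕ)) = ∅ := by
          apply Finset.filter_eq_empty_iff.2
          intro i hi
          simp only [Finset.mem_Icc] at hi
          have : k b < k i := hmono b i le_rfl (by omega) hi.2
          omega
        have hgv : g = (v:ℕ) := by rw [hflt] at hcard; simpa using hcard
        left
        refine ⟨b, le_rfl, hbr, hvb, ?_⟩
        rcases cyc_eval r b (k b) hbr hkb.1 hkb.2 ((cycProd r k (b+1) r) v) with ⟨h1, h2⟩ | ⟨h1, h2, h3⟩ | ⟨h1, h2, h3⟩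
        · exact h2
        · omega
        · omega
      · -- v + 1 ≠ k i for all i ∈ [b, r]
        right
        have hnot' : ∀ i, b ≤ i → i ≤ r → (v:ℕ) + 1 ≠ k i := by
          intro i h1 h2
          rcases eq_or_ne i b with h | h
          · subst h; exact hvb
          · exact hnot i (by omega) h2
        refine ⟨hnot', ?_, ?_⟩ <;>
        · rcases le_or_gt (k b) (v:ℕ) with hle | hlt
          · -- k b ≤ v : cyc decrements g, and b enters the filter
            have hcardle : ((Finset.Icc (b+1) r).filter fun i => k i ≤ (v:ℕ)).card ≤ (v:ℕ) - k b := by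
              have : ((Finset.Icc (b+1) r).filter fun i => k i ≤ (v:ℕ)).card ≤ (Finset.Icc (k b + 1) (v:ℕ)).card := by
                apply Finset.card_le_card_of_injOn k
                · intro i hi
                  simp only [Finset.mem_coe, Finset.mem_filter, Finset.mem_Icc] at hi ⊢
                  exact ⟨hmono b i le_rfl (by omega) hi.1.2, hi.2⟩
                · intro i hi j hj hij
                  simp only [Finset.coe_filter, Set.mem_setOf_eq, Finset.mem_Icc] at hi hj
                  by_contra hne
                  rcases lt_or_gt_of_ne hne with h | h
                  · exact absurd hij (Nat.ne_of_lt (hmono i j (by omega) h hj.1.2))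
                  · exact absurd hij.symm (Nat.ne_of_lt (hmono j i (by omega) h hi.1.2))
              rw [Nat.card_Icc] at this
              omega
            have hgkb : k b ≤ g := by omega
            have hcins : ((Finset.Icc b r).filter fun i => k i ≤ (v:ℕ)).card
                = ((Finset.Icc (b+1) r).filter fun i => k i ≤ (v:ℕ)).card + 1 := by
              rw [hicc, Finset.filter_insert, if_pos hle,
                Finset.card_insert_of_notMem (fun hc => hnmem (Finset.mem_of_mem_filter b hc))]
            rcases cyc_eval r b (k b) hbr hkb.1 hkb.2 ((cycProd r k (b+1) r) v) with ⟨h1, h2⟩ | ⟨h1, h2, h3⟩ | ⟨h1, h2, h3⟩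
            · -- g + 1 = k b : impossible since k b ≤ g
              omega
            · omega
            · exfalso
              apply h2
              constructor
              · omega
              · omega
          · -- v < k b : in fact v + 1 < k b, inner value g ≤ v is fixed
            have hvkb : (v:ℕ) + 1 < k b := by omega
            have hcins : ((Finset.Icc b r).filter fun i => k i ≤ (v:ℕ)).card
                = ((Finset.Icc (b+1) r).filter fun i => k i ≤ (v:ℕ)).card := by
              rw [hicc, Finset.filter_insert, if_neg (by omega)]
            rcases cyc_eval r b (k b) hbr hkb.1 hkb.2 ((cycProd r k (b+1) r) v) with ⟨h1, h2⟩ | ⟨h1, h2, h3⟩ | ⟨h1, h2, h3⟩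
            · omega
            · omega
            · rw [h3]
              -- g ≤ v < k b - 1 ≤ b, so bound g + 1 ≤ b
              omega

end Aux

/-- the trichotomy for `w = Π_2 ⋯ Π_a` and a string of consecutive
simple roots `α_m, …, α_n`:  (1) some `w(α_t)` is positive; or (2) `Π_a` sends
`α_m, …, α_n` to consecutive simple roots `α_c, …, α_{c+n-m}`; or (3) `w(α_m)` is
negative and `Π_a` sends `α_{m+1}, …, α_n` to consecutive simple roots. -/
theorem stmt13 (r a m n : ℕ) (hr : 1 ≤ r) (ha : 2 ≤ a) (c k : ℕ → ℕ)
    (hc : ∀ j, 1 ≤ j → j ≤ a → 1 ≤ c j) (hcsum : psum c a = r + 1)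
    (hka : ∀ i, psum c 1 ≤ i → i ≤ r → 1 ≤ k i ∧ k i ≤ i + 1)
    (hkb : ∀ j, 2 ≤ j → j ≤ a → ∀ i, psum c (j - 1) ≤ i → i + 1 ≤ psum c j - 1 →
      k i < k (i + 1))
    (hm : 1 ≤ m) (hmn : m ≤ n) (hn : n ≤ r) :
    (∃ t, m ≤ t ∧ t ≤ n ∧ posRoot r (tailProd r a c k 2) t) ∨
    (∃ cc, 1 ≤ cc ∧ ∀ s, s ≤ n - m → eqRoot r (tailProd r a c k a) (m + s) (cc + s)) ∨
    (negRoot r (tailProd r a c k 2) m ∧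
      ∃ cc, 1 ≤ cc ∧ ∀ s, m + 1 + s ≤ n →
        eqRoot r (tailProd r a c k a) (m + 1 + s) (cc + s)) := by
  classical
  set x := psum c (a - 1) with hxdef
  have hpsa : psum c a = x + c a := by
    rw [hxdef, show a = (a - 1) + 1 by omega, psum_succ]
    congr 1 <;> omega
  have hca : 1 ≤ c a := hc a (by omega) le_rfl
  have hx1 : 1 ≤ x := by
    have h1 : psum c 1 ≤ x := psum_mono c (by omega)
    have := hc 1 le_rfl (by omega)
    rw [psum_one] at h1
    omega
  have hxr : x ≤ r := by omega
  have hp1x : psum c 1 ≤ x := psum_mono c (by omega)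
  have hk1 : ∀ i, x ≤ i → i ≤ r → 1 ≤ k i ∧ k i ≤ i + 1 :=
    fun i h1 h2 => hka i (le_trans hp1x h1) h2
  have hk2 : ∀ i, x ≤ i → i < r → k i < k (i+1) := by
    intro i h1 h2
    exact hkb a ha le_rfl i (by omega) (by omega)
  have hmono := kmono r x k hk2
  set P := cycProd r k x r with hPdef
  have hPa : tailProd r a c k a = P := by
    rw [tailProd_last, hPdef, show psum c a - 1 = r by omega]
  set u := (((List.range' 2 (a - 2)).map fun j =>
      cycProd r k (psum c (j - 1)) (psum c j - 1)).prod) with hudef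
  have hw : tailProd r a c k 2 = u * P := by
    rw [tailProd_split r a c k ha, hPa]
  have ufix : ∀ v : Fin (r+1), x ≤ (v:ℕ) → u v = v := by
    intro v hv
    apply prod_fix
    intro g hg
    simp only [List.mem_map, List.mem_range'_1] at hg
    obtain ⟨j, hj, rfl⟩ := hg
    apply cycProd_fix_big r _ _ x k v _ hv
    have : psum c j ≤ x := psum_mono c (by omega)
    omega
  have upres : ∀ v : Fin (r+1), (v:ℕ) < x → ((u v : Fin (r+1)):ℕ) < x := by
    intro v hv
    by_contra hcon
    push_neg at hcon
    have := ufix (u v) hcon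
    have hvv : u v = v := u.injective this
    rw [hvv] at hcon
    omega
  have eval := cycProd_eval r k x (by omega) hk1 hk2
  set KK : ℕ → Prop := fun t => ∃ i, x ≤ i ∧ i ≤ r ∧ k i = t with hKKdef
  have fOf : ∀ i, i ≤ r → ((finOf r i : Fin (r+1)):ℕ) = i := by
    intro i h; simp [finOf]; omega
  have fval : ∀ v : Fin (r+1), ¬ KK ((v:ℕ)+1) →
      ((P v : Fin (r+1)):ℕ) + ((Finset.Icc x r).filter fun i => k i ≤ (v:ℕ)).card = (v:ℕ) ∧
      ((P v : Fin (r+1)):ℕ) + 1 ≤ x := by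
    intro v hv
    rcases eval v with ⟨i, h1, h2, h3, h4⟩ | ⟨h1, h2, h3⟩
    · exact absurd ⟨i, h1, h2, h3.symm⟩ hv
    · exact ⟨h2, h3⟩
  have kval : ∀ (v : Fin (r+1)) (i : ℕ), x ≤ i → i ≤ r → (v:ℕ) + 1 = k i →
      ((P v : Fin (r+1)):ℕ) = i := by
    intro v i hxi hir hki
    rcases eval v with ⟨i', h1, h2, h3, h4⟩ | ⟨h1, h2, h3⟩
    · have : i' = i := by
        by_contra hne
        rcases lt_or_gt_of_ne hne with h | h
        · have := hmono i' i h1 h hir; omega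
        · have := hmono i i' hxi h h2; omega
      rw [h4, this]
    · exact absurd hki (h1 i hxi hir)
  have step : ∀ v w : Fin (r+1), (w:ℕ) = (v:ℕ) + 1 → ¬ KK ((v:ℕ)+1) → ¬ KK ((w:ℕ)+1) →
      ((P w : Fin (r+1)):ℕ) = ((P v : Fin (r+1)):ℕ) + 1 := by
    intro v w hwv hv hw'
    obtain ⟨hv1, hv2⟩ := fval v hv
    obtain ⟨hw1, hw2⟩ := fval w hw'
    have hcardeq : ((Finset.Icc x r).filter fun i => k i ≤ (w:ℕ)).card
        = ((Finset.Icc x r).filter fun i => k i ≤ (v:ℕ)).card := by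
      congr 1
      apply Finset.filter_congr
      intro i hi
      simp only [Finset.mem_Icc] at hi
      have : k i ≠ (v:ℕ) + 1 := fun hc => hv ⟨i, hi.1, hi.2, hc⟩
      constructor <;> intro <;> omega
    omega
  by_cases hA : ∃ t, m ≤ t ∧ t ≤ n ∧ KK (t+1)
  · left
    obtain ⟨t, hmt, htn, i', hxi', hi'r, hki'⟩ := hA
    refine ⟨t, hmt, htn, ?_⟩
    unfold posRoot
    rw [hw]
    simp only [Equiv.Perm.mul_apply]
    have htr : t ≤ r := by omega
    have hPt : ((P (finOf r t) : Fin (r+1)):ℕ) = i' := by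
      apply kval _ i' hxi' hi'r
      rw [fOf t htr]; omega
    by_cases hKt : KK t
    · obtain ⟨i, hxi, hir, hki⟩ := hKt
      have hPt1 : ((P (finOf r (t-1)) : Fin (r+1)):ℕ) = i := by
        apply kval _ i hxi hir
        rw [fOf (t-1) (by omega)]; omega
      have hii' : i < i' := by
        by_contra hcon
        push_neg at hcon
        rcases eq_or_lt_of_le hcon with h | h
        · subst h; omega
        · have := hmono i' i hxi' h hir; omega
      rw [ufix _ (by omega), ufix _ (by omega)]
      omega
    · have hPt1 := fval (finOf r (t-1)) (by rw [fOf (t-1) (by omega), show t - 1 + 1 = t by omega]; exact hKt)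
      have h1 : ((u (P (finOf r (t-1))) : Fin (r+1)):ℕ) < x := upres _ (by omega)
      rw [ufix (P (finOf r t)) (by omega)]
      omega
  · push_neg at hA
    have hB : ∀ t, m ≤ t → t ≤ n → ¬ KK (t+1) := hA
    by_cases hKm : KK m
    · right; right
      obtain ⟨i, hxi, hir, hki⟩ := hKm
      have hPm1 : ((P (finOf r (m-1)) : Fin (r+1)):ℕ) = i := by
        apply kval _ i hxi hir
        rw [fOf (m-1) (by omega)]; omega
      have hPm := fval (finOf r m) (by rw [fOf m (by omega)]; exact hB m le_rfl hmn)
      constructor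
      · unfold negRoot
        rw [hw]
        simp only [Equiv.Perm.mul_apply]
        have h1 : ((u (P (finOf r m)) : Fin (r+1)):ℕ) < x := upres _ (by omega)
        rw [ufix (P (finOf r (m-1))) (by omega)]
        omega
      · set cc := ((P (finOf r m) : Fin (r+1)):ℕ) + 1 with hcc
        refine ⟨cc, by omega, ?_⟩
        have claim : ∀ s, m + s ≤ n → ((P (finOf r (m+s)) : Fin (r+1)):ℕ) = (cc - 1) + s := by
          intro s
          induction s with
          | zero => intro _; simp [hcc]
          | succ s ihs =>
            intro hs
            have h1 := ihs (by omega)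
            have h2 := step (finOf r (m+s)) (finOf r (m+s+1))
              (by rw [fOf (m+s) (by omega), fOf (m+s+1) (by omega)])
              (by rw [fOf (m+s) (by omega)]; exact hB (m+s) (by omega) (by omega))
              (by rw [fOf (m+s+1) (by omega)]; exact hB (m+s+1) (by omega) (by omega))
            rw [show m + (s+1) = m + s + 1 by omega, h2, h1]
            omega
        intro s hs
        rw [hPa]
        constructor
        · rw [show m + 1 + s - 1 = m + s by omega]
          rw [claim s (by omega)]
          omega
        · rw [show m + 1 + s = m + (s+1) by omega]
          rw [claim (s+1) (by omega)]
          omega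
    · right; left
      have hPm1 := fval (finOf r (m-1)) (by rw [fOf (m-1) (by omega), show m - 1 + 1 = m by omega]; exact hKm)
      have hstep0 := step (finOf r (m-1)) (finOf r m)
        (by rw [fOf (m-1) (by omega), fOf m (by omega)]; omega)
        (by rw [fOf (m-1) (by omega), show m - 1 + 1 = m by omega]; exact hKm)
        (by rw [fOf m (by omega)]; exact hB m le_rfl hmn)
      set cc := ((P (finOf r m) : Fin (r+1)):ℕ) with hcc
      have hcc1 : 1 ≤ cc := by omega
      refine ⟨cc, hcc1, ?_⟩
      have claim : ∀ s, m + s ≤ n → ((P (finOf r (m+s)) : Fin (r+1)):ℕ) = cc + s := by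
        intro s
        induction s with
        | zero => intro _; simp [hcc]
        | succ s ihs =>
          intro hs
          have h1 := ihs (by omega)
          have h2 := step (finOf r (m+s)) (finOf r (m+s+1))
            (by rw [fOf (m+s) (by omega), fOf (m+s+1) (by omega)])
            (by rw [fOf (m+s) (by omega)]; exact hB (m+s) (by omega) (by omega))
            (by rw [fOf (m+s+1) (by omega)]; exact hB (m+s+1) (by omega) (by omega))
          rw [show m + (s+1) = m + s + 1 by omega, h2, h1]
          omega
      intro s hs
      rw [hPa]
      constructor
      · rcases Nat.eq_zero_or_pos s with h | h
        · subst h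
          rw [show m + 0 - 1 = m - 1 by omega]
          omega
        · rw [show m + s - 1 = m + (s - 1) by omega, claim (s-1) (by omega)]
          omega
      · rw [claim s (by omega)]
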